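/- Let a, c, d be real numbers with 0 < a ≤ d and c ≥ 0, and let T ≥ 1 be an integer. Then there exist stepsizes η^k ∈ (0, 1/d] and weights w^k ≥ 0 (for 0 ≤ k ≤ T, not all w^k zero, and depending only on a, d, T) such that every pair of nonnegative real sequences (r^k), (s^k) satisfying r^{k+1} ≤ (1 − aη^k)·r^k − η^k·s^k + (η^k)²·c for all 0 ≤ k ≤ T obeys (1/W^T)·Σ_{k=0}^T s^k w^k + a·r^{T+1} ≤ 32·d·r⁰·exp(−aT/(2d)) + 36c/(aT), where W^T = Σ_{k=0}^T w^k. -/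

import Mathlib

set_option maxHeartbeats 1000000


/-- combined sequence lemma. For `0 < a ≤ d`, `c ≥ 0` and an integer
`T ≥ 1`, there exist stepsizes `η^k ∈ (0, 1/d]` and weights `w^k ≥ 0` (not all zero,
depending only on `a, d, T`) such that every pair of nonnegative sequences
`(r^k), (s^k)` satisfying `r^{k+1} ≤ (1 − aη^k) r^k − η^k s^k + (η^k)² c` for
`0 ≤ k ≤ T` obeys
`(1/W^T) Σ_{k=0}^T s^k w^k + a r^{T+1} ≤ 32 d r⁰ exp(−aT/(2d)) + 36c/(aT)`. -/
theorem sequence_lemma_combined (a c d : ℝ) (ha : 0 < a) (had : a ≤ d) (hc : 0 ≤ c)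
    (T : ℕ) (hT : 1 ≤ T) :
    ∃ η w : ℕ → ℝ,
      (∀ k ≤ T, 0 < η k ∧ η k ≤ 1 / d) ∧
      (∀ k ≤ T, 0 ≤ w k) ∧
      (0 < ∑ k ∈ Finset.range (T + 1), w k) ∧
      ∀ r s : ℕ → ℝ, (∀ k, 0 ≤ r k) → (∀ k, 0 ≤ s k) →
        (∀ k ≤ T, r (k + 1) ≤ (1 - a * η k) * r k - η k * s k + (η k) ^ 2 * c) →
        (1 / ∑ k ∈ Finset.range (T + 1), w k) *
            (∑ k ∈ Finset.range (T + 1), s k * w k) + a * r (T + 1)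
          ≤ 32 * d * r 0 * Real.exp (-(a * T) / (2 * d)) + 36 * c / (a * T) := by
  have hd : 0 < d := lt_of_lt_of_le ha had
  set m := T / 2 with hm
  set t₀ := T - m with ht₀def
  have hmle : m ≤ t₀ := by omega
  have ht01 : 1 ≤ t₀ := by omega
  have hTsum : t₀ + m = T := by omega
  have hTle : T ≤ 2 * t₀ := by omega
  have hT2m : T ≤ 2 * m + 1 := by omega
  set κ := 2 * d / a with hκdef
  have hκ : 2 ≤ κ := by rw [hκdef, le_div_iff₀ ha]; linarith
  have hκ0 : (0:ℝ) < κ := by linarith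
  have haκ : a * κ = 2 * d := by rw [hκdef]; field_simp
  set β := 1 - a / d with hβdef
  have hβ0 : 0 ≤ β := by
    rw [hβdef]; have : a / d ≤ 1 := (div_le_one hd).mpr had
    linarith
  have hβ1 : β < 1 := by
    rw [hβdef]; have : 0 < a / d := div_pos ha hd
    linarith
  clear_value κ β
  set η : ℕ → ℝ := fun k => if k < t₀ then 1 / d else 2 / (a * (κ + ((k - t₀ : ℕ) : ℝ))) with hηdef
  set w : ℕ → ℝ := fun k => if k < t₀ then β ^ (t₀ - 1 - k) else (κ + ((k - t₀ : ℕ) : ℝ)) / κ with hwdef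
  have hη1 : ∀ k, k < t₀ → η k = 1 / d := by
    intro k hk; simp only [hηdef]; rw [if_pos hk]
  have hη2 : ∀ j : ℕ, η (t₀ + j) = 2 / (a * (κ + (j : ℝ))) := by
    intro j; simp only [hηdef]; rw [if_neg (by omega), Nat.add_sub_cancel_left]
  have hw1 : ∀ k, k < t₀ → w k = β ^ (t₀ - 1 - k) := by
    intro k hk; simp only [hwdef]; rw [if_pos hk]
  have hw2 : ∀ j : ℕ, w (t₀ + j) = (κ + (j : ℝ)) / κ := by
    intro j; simp only [hwdef]; rw [if_neg (by omega), Nat.add_sub_cancel_left]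
  have hxpos : ∀ j : ℕ, (0:ℝ) < κ + (j : ℝ) := by
    intro j; have := Nat.cast_nonneg (α := ℝ) j; linarith
  have hηprop : ∀ k ≤ T, 0 < η k ∧ η k ≤ 1 / d := by
    intro k hk
    by_cases h : k < t₀
    · rw [hη1 k h]; exact ⟨by positivity, le_refl _⟩
    · have hke : k = t₀ + (k - t₀) := by omega
      rw [hke, hη2]
      have hx := hxpos (k - t₀)
      have hj := Nat.cast_nonneg (α := ℝ) (k - t₀)
      constructor
      · apply div_pos (by norm_num) (by nlinarith)
      · rw [div_le_div_iff₀ (by nlinarith) hd]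
        nlinarith
  have hwnn : ∀ k, 0 ≤ w k := by
    intro k
    by_cases h : k < t₀
    · rw [hw1 k h]; exact pow_nonneg hβ0 _
    · have hke : k = t₀ + (k - t₀) := by omega
      rw [hke, hw2]
      exact div_nonneg (hxpos _).le hκ0.le
  refine ⟨η, w, hηprop, fun k _ => hwnn k, ?_, ?_⟩
  · apply Finset.sum_pos' (fun i _ => hwnn i)
    refine ⟨t₀, Finset.mem_range.mpr (by omega), ?_⟩
    have h0 : w t₀ = (κ + ((0:ℕ) : ℝ)) / κ := by
      have h00 : t₀ = t₀ + 0 := by omega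
      rw [h00, hw2]
    rw [h0]; push_cast
    rw [add_zero]; exact div_pos hκ0 hκ0
  intro r s hr hs hrec
  -- cast facts
  have hM0 : (0:ℝ) ≤ (m:ℝ) := Nat.cast_nonneg m
  have hTr1 : (1:ℝ) ≤ (T:ℝ) := by exact_mod_cast hT
  have hTr2M : (T:ℝ) ≤ 2 * (m:ℝ) + 1 := by exact_mod_cast hT2m
  have hTpos : (0:ℝ) < (T:ℝ) := by exact_mod_cast hT
  have hTr2t : (T:ℝ) ≤ 2 * (t₀ : ℝ) := by exact_mod_cast hTle
  set E : ℝ := Real.exp (-(a * (T:ℝ)) / (2 * d)) with hEdef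
  have hEpos : 0 < E := Real.exp_pos _
  have hP0 : 0 ≤ β ^ t₀ := pow_nonneg hβ0 _
  -- β^t₀ ≤ E
  have hPE : β ^ t₀ ≤ E := by
    have h1 : β ≤ Real.exp (-(a / d)) := by
      have := Real.add_one_le_exp (-(a / d)); rw [hβdef]; linarith
    have h2 : β ^ t₀ ≤ Real.exp (-(a / d)) ^ t₀ := pow_le_pow_left₀ hβ0 h1 t₀
    have h3 : Real.exp (-(a / d)) ^ t₀ = Real.exp ((t₀ : ℝ) * (-(a / d))) := by
      rw [Real.exp_nat_mul]
    have h4 : Real.exp ((t₀ : ℝ) * (-(a / d))) ≤ E := by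
      rw [hEdef]; apply Real.exp_le_exp.mpr
      rw [neg_div, mul_neg, neg_le_neg_iff, div_le_iff₀ (by positivity)]
      have h5 : a * (T:ℝ) ≤ a * (2 * (t₀:ℝ)) := by nlinarith
      calc a * (T:ℝ) ≤ a * (2 * (t₀:ℝ)) := h5
        _ = (t₀:ℝ) * (a / d) * (2 * d) := by field_simp
    calc β ^ t₀ ≤ Real.exp (-(a / d)) ^ t₀ := h2
      _ = _ := h3
      _ ≤ E := h4
  -- key per-step inequality multiplied by H_k = w k / η k
  have hkey : ∀ k, k ≤ T → w k * s k + w k / η k * r (k + 1) ≤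
      (1 - a * η k) * (w k / η k) * r k + c * (η k * w k) := by
    intro k hk
    have hηk : 0 < η k := (hηprop k hk).1
    have h := hrec k hk
    have h2 : 0 ≤ w k / η k := div_nonneg (hwnn k) hηk.le
    have h3 := mul_le_mul_of_nonneg_left h h2
    have e : w k / η k * ((1 - a * η k) * r k - η k * s k + (η k) ^ 2 * c) =
        (1 - a * η k) * (w k / η k) * r k - w k * s k + c * (η k * w k) := by
      field_simp
    rw [e] at h3
    linarith
  -- telescoping condition G_{k+1} ≤ H_k
  have hG : ∀ k, k + 1 ≤ T →
      (1 - a * η (k + 1)) * (w (k + 1) / η (k + 1)) ≤ w k / η k := by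
    intro k hk
    rcases lt_trichotomy (k + 1) t₀ with h | h | h
    · rw [hη1 _ h, hη1 k (by omega), hw1 _ h, hw1 k (by omega)]
      have he : t₀ - 1 - k = (t₀ - 1 - (k + 1)) + 1 := by omega
      rw [he, pow_succ]
      apply le_of_eq
      rw [hβdef]
      field_simp
    · have hk' : k < t₀ := by omega
      rw [hη1 k hk', hw1 k hk']
      have e0 : t₀ - 1 - k = 0 := by omega
      rw [e0, pow_zero]
      have hk1 : k + 1 = t₀ + 0 := by omega
      rw [hk1, hη2, hw2]
      push_cast
      rw [add_zero]
      have hηeq : 2 / (a * κ) = 1 / d := by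
        rw [haκ]; field_simp
      rw [hηeq]
      have hx0 : (0:ℝ) ≤ 1 / (1 / d) := by positivity
      have h1 : 1 - a * (1 / d) ≤ 1 := by
        have : 0 ≤ a * (1 / d) := by positivity
        linarith
      calc (1 - a * (1 / d)) * (κ / κ / (1 / d))
          = (1 - a * (1 / d)) * (1 / (1 / d)) := by rw [div_self hκ0.ne']
        _ ≤ 1 * (1 / (1 / d)) := mul_le_mul_of_nonneg_right h1 hx0
        _ = 1 / (1 / d) := one_mul _
    · obtain ⟨j, rfl⟩ : ∃ j, k = t₀ + j := ⟨k - t₀, by omega⟩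
      have hk1 : t₀ + j + 1 = t₀ + (j + 1) := by omega
      rw [hk1, hη2, hη2, hw2, hw2]
      push_cast
      have hx := hxpos j
      have hx1 : (0:ℝ) < κ + (j:ℝ) + 1 := by linarith
      have hxx : κ + ((j:ℝ) + 1) = (κ + (j:ℝ)) + 1 := by ring
      rw [hxx]
      have e1 : (κ + (j:ℝ) + 1) / κ / (2 / (a * (κ + (j:ℝ) + 1))) =
          a * (κ + (j:ℝ) + 1) ^ 2 / (2 * κ) := by field_simp
      have e2 : a * (2 / (a * (κ + (j:ℝ) + 1))) = 2 / (κ + (j:ℝ) + 1) := by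
        field_simp
      have e3 : (κ + (j:ℝ)) / κ / (2 / (a * (κ + (j:ℝ)))) =
          a * (κ + (j:ℝ)) ^ 2 / (2 * κ) := by field_simp
      rw [e1, e2, e3]
      have e4 : (1 - 2 / (κ + (j:ℝ) + 1)) * (a * (κ + (j:ℝ) + 1) ^ 2 / (2 * κ)) =
          a * ((κ + (j:ℝ) + 1) * (κ + (j:ℝ) - 1)) / (2 * κ) := by
        field_simp; ring
      rw [e4]
      exact (div_le_div_iff_of_pos_right (by linarith : (0:ℝ) < 2 * κ)).mpr (by nlinarith)
  -- weighted telescoping sum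
  have hA : ∀ n, n ≤ T → ∑ k ∈ Finset.range (n + 1), s k * w k + w n / η n * r (n + 1) ≤
      d * β ^ t₀ * r 0 + c * ∑ k ∈ Finset.range (n + 1), η k * w k := by
    intro n
    induction n with
    | zero =>
      intro _
      rw [Finset.sum_range_one, Finset.sum_range_one]
      have h := hkey 0 (by omega)
      have hη0 : η 0 = 1 / d := hη1 0 (by omega)
      have hw0 : w 0 = β ^ (t₀ - 1) := by rw [hw1 0 (by omega)]; norm_num
      have hβeq : 1 - a * (1 / d) = β := by rw [hβdef]; ring
      have e : (1 - a * η 0) * (w 0 / η 0) = d * β ^ t₀ := by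
        rw [hη0, hw0, hβeq]
        have hpow : β ^ t₀ = β ^ (t₀ - 1) * β := by
          rw [← pow_succ]; congr 1; omega
        rw [hpow]
        field_simp
      rw [e] at h
      norm_num
      linarith
    | succ n ih =>
      intro hn
      have ihh := ih (by omega)
      rw [Finset.sum_range_succ (fun k => s k * w k) (n + 1),
        Finset.sum_range_succ (fun k => η k * w k) (n + 1)]
      have h := hkey (n + 1) hn
      have hg := mul_le_mul_of_nonneg_right (hG n hn) (hr (n + 1))
      linarith
  -- phase-1 decay
  have hB : ∀ k, k ≤ t₀ → r k ≤ β ^ k * r 0 + c / (a * d) := by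
    intro k
    induction k with
    | zero =>
      intro _
      have h0 : 0 ≤ c / (a * d) := by positivity
      rw [pow_zero, one_mul]
      linarith
    | succ k ih =>
      intro hk
      have hk' : k < t₀ := by omega
      have ihh := ih (by omega)
      have h := hrec k (by omega)
      rw [hη1 k hk'] at h
      have hβeq : 1 - a * (1 / d) = β := by rw [hβdef]; ring
      rw [hβeq] at h
      have hsk : 0 ≤ 1 / d * s k := mul_nonneg (by positivity) (hs k)
      have h3 := mul_le_mul_of_nonneg_left ihh hβ0
      have e3 : β * (c / (a * d)) + (1 / d) ^ 2 * c = c / (a * d) := by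
        rw [hβdef]; field_simp; ring
      rw [pow_succ]
      nlinarith [h, hsk, h3, e3]
  -- phase-2 recursion, cleared form
  have hrec2 : ∀ j : ℕ, j ≤ m → (κ + (j:ℝ)) * r (t₀ + j + 1) ≤
      (κ + (j:ℝ) - 2) * r (t₀ + j) + 4 * c / (a ^ 2 * (κ + (j:ℝ))) := by
    intro j hj
    have h := hrec (t₀ + j) (by omega)
    rw [hη2 j] at h
    have hx := hxpos j
    have h2 := mul_le_mul_of_nonneg_left h hx.le
    have e : (κ + (j:ℝ)) * ((1 - a * (2 / (a * (κ + (j:ℝ))))) * r (t₀ + j)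
        - 2 / (a * (κ + (j:ℝ))) * s (t₀ + j) + (2 / (a * (κ + (j:ℝ)))) ^ 2 * c)
        = (κ + (j:ℝ) - 2) * r (t₀ + j) - 2 / a * s (t₀ + j)
          + 4 * c / (a ^ 2 * (κ + (j:ℝ))) := by
      field_simp
      ring
    rw [e] at h2
    have hsk : 0 ≤ 2 / a * s (t₀ + j) := mul_nonneg (by positivity) (hs _)
    linarith
  -- phase-2 weighted decay
  have hC : ∀ j : ℕ, j ≤ m → (κ + (j:ℝ) - 1) * (κ + (j:ℝ)) * r (t₀ + j + 1) ≤
      (κ - 2) * (κ - 1) * r t₀ + ((j:ℝ) + 1) * (4 * c / a ^ 2) := by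
    intro j
    induction j with
    | zero =>
      intro _
      have h := hrec2 0 (by omega)
      push_cast at h ⊢
      norm_num at h ⊢
      have h2 := mul_le_mul_of_nonneg_left h (by linarith : (0:ℝ) ≤ κ - 1)
      have e : (κ - 1) * (4 * c / (a ^ 2 * κ)) ≤ 4 * c / a ^ 2 := by
        have h1 : (κ - 1) * (4 * c / (a ^ 2 * κ)) = (4 * c / a ^ 2) * ((κ - 1) / κ) := by
          field_simp
        have hle1 : (κ - 1) / κ ≤ 1 := by rw [div_le_one hκ0]; linarith
        rw [h1]
        exact mul_le_of_le_one_right (div_nonneg (by linarith) (sq_nonneg a)) hle1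
      nlinarith [h2, e]
    | succ j ih =>
      intro hj
      have ihh := ih (by omega)
      have h := hrec2 (j + 1) hj
      push_cast at h
      rw [show κ + ((j:ℝ) + 1) = κ + (j:ℝ) + 1 from by ring] at h
      have hx := hxpos j
      have hx1 : (0:ℝ) < κ + (j:ℝ) + 1 := by linarith
      have h2 := mul_le_mul_of_nonneg_left h hx.le
      have e : (κ + (j:ℝ)) * (4 * c / (a ^ 2 * (κ + (j:ℝ) + 1))) ≤ 4 * c / a ^ 2 := by
        have h1 : (κ + (j:ℝ)) * (4 * c / (a ^ 2 * (κ + (j:ℝ) + 1)))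
            = (4 * c / a ^ 2) * ((κ + (j:ℝ)) / (κ + (j:ℝ) + 1)) := by
          field_simp
        have hle1 : (κ + (j:ℝ)) / (κ + (j:ℝ) + 1) ≤ 1 := by rw [div_le_one hx1]; linarith
        rw [h1]
        exact mul_le_of_le_one_right (div_nonneg (by linarith) (sq_nonneg a)) hle1
      push_cast
      rw [show κ + ((j:ℝ) + 1) = κ + (j:ℝ) + 1 from by ring]
      simp only [← add_assoc] at h2 ihh ⊢
      nlinarith [h2, e, ihh]
  -- sum splitting
  have hT1split : T + 1 = t₀ + (m + 1) := by omega
  have hsum_ηw : ∑ k ∈ Finset.range (T + 1), η k * w k ≤ 1 / a + ((m:ℝ) + 1) / d := by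
    rw [hT1split, Finset.sum_range_add]
    have h1 : ∑ k ∈ Finset.range t₀, η k * w k ≤ 1 / a := by
      have e : ∀ k ∈ Finset.range t₀, η k * w k = (1 / d) * β ^ (t₀ - 1 - k) := by
        intro k hk
        rw [hη1 k (Finset.mem_range.mp hk), hw1 k (Finset.mem_range.mp hk)]
      rw [Finset.sum_congr rfl e, ← Finset.mul_sum]
      have hrefl : ∑ k ∈ Finset.range t₀, β ^ (t₀ - 1 - k) = ∑ k ∈ Finset.range t₀, β ^ k :=
        Finset.sum_range_reflect (fun i => β ^ i) t₀
      rw [hrefl]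
      have hgeom : ∑ k ∈ Finset.range t₀, β ^ k ≤ d / a := by
        have h1 := geom_sum_mul β t₀
        have h3 : (∑ i ∈ Finset.range t₀, β ^ i) * (1 - β) = 1 - β ^ t₀ := by
          linear_combination -h1
        have h4 : 1 - β = a / d := by rw [hβdef]; ring
        rw [h4] at h3
        have h6 : (∑ i ∈ Finset.range t₀, β ^ i) * (a / d) ≤ 1 := by
          rw [h3]; linarith [hP0]
        calc (∑ i ∈ Finset.range t₀, β ^ i)
            = (∑ i ∈ Finset.range t₀, β ^ i) * (a / d) * (d / a) := by field_simp
          _ ≤ 1 * (d / a) := mul_le_mul_of_nonneg_right h6 (div_nonneg hd.le ha.le)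
          _ = d / a := one_mul _
      calc (1 / d) * (∑ k ∈ Finset.range t₀, β ^ k) ≤ (1 / d) * (d / a) :=
            mul_le_mul_of_nonneg_left hgeom (by positivity : (0:ℝ) ≤ 1 / d)
        _ = 1 / a := by field_simp
    have h2 : ∑ j ∈ Finset.range (m + 1), η (t₀ + j) * w (t₀ + j) = ((m:ℝ) + 1) * (1 / d) := by
      have e : ∀ j ∈ Finset.range (m + 1), η (t₀ + j) * w (t₀ + j) = 1 / d := by
        intro j _
        rw [hη2 j, hw2 j]
        have hx := hxpos j
        rw [div_mul_div_comm]
        rw [div_eq_div_iff (mul_pos (mul_pos ha hx) hκ0).ne' hd.ne']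
        linear_combination (-(κ + (j:ℝ))) * haκ
      rw [Finset.sum_congr rfl e, Finset.sum_const, Finset.card_range, nsmul_eq_mul]
      push_cast
      ring
    rw [h2]
    have : ((m:ℝ) + 1) * (1 / d) = ((m:ℝ) + 1) / d := by ring
    linarith [h1, this]
  set W := ∑ k ∈ Finset.range (T + 1), w k with hWdef
  have hf2 : ∑ j ∈ Finset.range (m + 1), w (t₀ + j)
      = ((m:ℝ) + 1) + ((m:ℝ) * ((m:ℝ) + 1) / 2) / κ := by
    have e : ∀ j ∈ Finset.range (m + 1), w (t₀ + j) = 1 + (j:ℝ) / κ := by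
      intro j _
      rw [hw2 j, add_div, div_self hκ0.ne']
    rw [Finset.sum_congr rfl e, Finset.sum_add_distrib, Finset.sum_const, Finset.card_range]
    have hid : ∑ j ∈ Finset.range (m + 1), (j:ℝ) = (m:ℝ) * ((m:ℝ) + 1) / 2 := by
      have h := Finset.sum_range_id_mul_two (m + 1)
      have h' : ((∑ i ∈ Finset.range (m + 1), i : ℕ) : ℝ) * 2 = (((m + 1) * m : ℕ) : ℝ) := by
        exact_mod_cast congrArg (Nat.cast : ℕ → ℝ) h
      rw [Nat.cast_sum] at h'
      push_cast at h'
      linarith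
    rw [← Finset.sum_div, hid, nsmul_eq_mul]
    push_cast
    ring
  have hWsplit : W = (∑ k ∈ Finset.range t₀, w k) + ∑ j ∈ Finset.range (m + 1), w (t₀ + j) := by
    rw [hWdef, hT1split, Finset.sum_range_add]
  have hph1nn : 0 ≤ ∑ k ∈ Finset.range t₀, w k := Finset.sum_nonneg fun i _ => hwnn i
  have hWge : ((m:ℝ) + 1) + ((m:ℝ) * ((m:ℝ) + 1) / 2) / κ ≤ W := by
    rw [hWsplit, hf2]; linarith
  have hWM1 : (m:ℝ) + 1 ≤ W := by
    have h0 : 0 ≤ ((m:ℝ) * ((m:ℝ) + 1) / 2) / κ := by positivity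
    linarith
  have hW1 : (1:ℝ) ≤ W := by linarith
  have hWpos : (0:ℝ) < W := by linarith
  have hWκ : 2 * κ * ((m:ℝ) + 1) + (m:ℝ) * ((m:ℝ) + 1) ≤ 2 * κ * W := by
    have h := mul_le_mul_of_nonneg_left hWge (by positivity : (0:ℝ) ≤ 2 * κ)
    have e : 2 * κ * (((m:ℝ) + 1) + ((m:ℝ) * ((m:ℝ) + 1) / 2) / κ)
        = 2 * κ * ((m:ℝ) + 1) + (m:ℝ) * ((m:ℝ) + 1) := by field_simp
    rw [e] at h
    exact h
  clear_value W
  -- sum bound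
  have hAT := hA T (le_refl T)
  have hdrop : 0 ≤ w T / η T * r (T + 1) :=
    mul_nonneg (div_nonneg (hwnn T) (hηprop T le_rfl).1.le) (hr _)
  have hsum_c := mul_le_mul_of_nonneg_left hsum_ηw hc
  have hS : ∑ k ∈ Finset.range (T + 1), s k * w k
      ≤ d * β ^ t₀ * r 0 + c * (1 / a + ((m:ℝ) + 1) / d) := by linarith
  -- final assembly pieces
  have hcTr : 0 ≤ c / (a * (T:ℝ)) := by positivity
  have hdER0 : 0 ≤ d * E * r 0 := mul_nonneg (mul_nonneg hd.le hEpos.le) (hr 0)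
  have hfrac : (1 / W) * (∑ k ∈ Finset.range (T + 1), s k * w k)
      ≤ d * β ^ t₀ * r 0 / W + c / (a * W) + c * ((m:ℝ) + 1) / (d * W) := by
    have h := mul_le_mul_of_nonneg_left hS (div_nonneg zero_le_one hWpos.le)
    have e : (1 / W) * (d * β ^ t₀ * r 0 + c * (1 / a + ((m:ℝ) + 1) / d))
        = d * β ^ t₀ * r 0 / W + c / (a * W) + c * ((m:ℝ) + 1) / (d * W) := by
      field_simp
      ring
    rw [e] at h
    exact h
  have p1 : d * β ^ t₀ * r 0 / W ≤ d * E * r 0 := by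
    have h1 : d * β ^ t₀ * r 0 / W ≤ d * β ^ t₀ * r 0 :=
      div_le_self (mul_nonneg (mul_nonneg hd.le hP0) (hr 0)) hW1
    have h2 : d * β ^ t₀ * r 0 ≤ d * E * r 0 := by
      nlinarith [mul_nonneg (mul_nonneg hd.le (sub_nonneg.mpr hPE)) (hr 0)]
    linarith
  have p2 : c / (a * W) ≤ 2 * (c / (a * (T:ℝ))) := by
    rw [show 2 * (c / (a * (T:ℝ))) = (2 * c) / (a * (T:ℝ)) from by ring,
      div_le_div_iff₀ (mul_pos ha hWpos) (mul_pos ha hTpos)]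
    have hTW : (T:ℝ) ≤ 2 * W := by linarith only [hTr2M, hWM1]
    have hca : (0:ℝ) ≤ c * a := mul_nonneg hc ha.le
    have hh := mul_le_mul_of_nonneg_left hTW hca
    linarith only [hh]
  have p3 : c * ((m:ℝ) + 1) / (d * W) ≤ 16 * (c / (a * (T:ℝ))) := by
    rw [show 16 * (c / (a * (T:ℝ))) = (16 * c) / (a * (T:ℝ)) from by ring,
      div_le_div_iff₀ (mul_pos hd hWpos) (mul_pos ha hTpos)]
    -- goal: c * (m+1) * (a * T) ≤ 16 * c * (d * W)
    have k2 : 4 * a * (2 * κ * W) = 16 * (d * W) := by linear_combination 8 * W * haκ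
    have k3 := mul_le_mul_of_nonneg_left hWκ (by positivity : (0:ℝ) ≤ 4 * a)
    have k4 : ((m:ℝ) + 1) * (a * (T:ℝ)) ≤ 4 * a * (2 * κ * ((m:ℝ) + 1) + (m:ℝ) * ((m:ℝ) + 1)) := by
      have j1 := mul_le_mul_of_nonneg_left hTr2M
        (mul_nonneg ha.le (by linarith : (0:ℝ) ≤ (m:ℝ) + 1))
      have j2 : (0:ℝ) ≤ a * (((m:ℝ) + 1) * (κ - 2)) :=
        mul_nonneg ha.le (mul_nonneg (by linarith) (by linarith))
      have j3 : (0:ℝ) ≤ a * ((m:ℝ) * (m:ℝ)) := mul_nonneg ha.le (mul_nonneg hM0 hM0)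
      have j4 : (0:ℝ) ≤ a * (m:ℝ) := mul_nonneg ha.le hM0
      have j5 : (0:ℝ) ≤ a := ha.le
      linarith only [j1, j2, j3, j4, j5]
    have k5 : ((m:ℝ) + 1) * (a * (T:ℝ)) ≤ 16 * (d * W) := by linarith only [k2, k3, k4]
    linarith only [mul_le_mul_of_nonneg_left k5 hc]
  -- bound on a * r (T+1)
  have hCm := hC m (le_refl m)
  rw [hTsum] at hCm
  have hRt := hB t₀ le_rfl
  have q0 : (0:ℝ) < (κ + (m:ℝ) - 1) * (κ + (m:ℝ)) :=
    mul_pos (by linarith only [hκ, hM0]) (by linarith only [hκ, hM0])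
  have hRf : r (T + 1) ≤ ((κ - 2) * (κ - 1) * r t₀ + ((m:ℝ) + 1) * (4 * c / a ^ 2))
      / ((κ + (m:ℝ) - 1) * (κ + (m:ℝ))) := by
    rw [le_div_iff₀ q0]
    linarith only [hCm]
  have haRf := mul_le_mul_of_nonneg_left hRf ha.le
  have hsplitRf : a * (((κ - 2) * (κ - 1) * r t₀ + ((m:ℝ) + 1) * (4 * c / a ^ 2))
      / ((κ + (m:ℝ) - 1) * (κ + (m:ℝ))))
      = (a * ((κ - 2) * (κ - 1) * r t₀)) / ((κ + (m:ℝ) - 1) * (κ + (m:ℝ)))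
        + (a * (((m:ℝ) + 1) * (4 * c / a ^ 2))) / ((κ + (m:ℝ) - 1) * (κ + (m:ℝ))) := by
    ring
  rw [hsplitRf] at haRf
  have hκ2nn : (0:ℝ) ≤ κ - 2 := by linarith only [hκ]
  have hκ1nn : (0:ℝ) ≤ κ - 1 := by linarith only [hκ]
  have q1 : (a * ((κ - 2) * (κ - 1) * r t₀)) / ((κ + (m:ℝ) - 1) * (κ + (m:ℝ)))
      ≤ d * E * r 0 + 4 * (c / (a * (T:ℝ))) := by
    have hmon0 := mul_le_mul_of_nonneg_left hRt (mul_nonneg hκ2nn hκ1nn)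
    have hmon := mul_le_mul_of_nonneg_left hmon0 ha.le
    have hdm := (div_le_div_iff_of_pos_right q0).mpr hmon
    have esplit : a * ((κ - 2) * (κ - 1) * (β ^ t₀ * r 0 + c / (a * d)))
        / ((κ + (m:ℝ) - 1) * (κ + (m:ℝ)))
        = (a * ((κ - 2) * (κ - 1) * (β ^ t₀ * r 0))) / ((κ + (m:ℝ) - 1) * (κ + (m:ℝ)))
          + (a * ((κ - 2) * (κ - 1) * (c / (a * d)))) / ((κ + (m:ℝ) - 1) * (κ + (m:ℝ))) := by
      ring
    rw [esplit] at hdm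
    have q1a : (a * ((κ - 2) * (κ - 1) * (β ^ t₀ * r 0))) / ((κ + (m:ℝ) - 1) * (κ + (m:ℝ)))
        ≤ d * E * r 0 := by
      rw [div_le_iff₀ q0]
      have haP : a * β ^ t₀ ≤ d * E := by
        have j1 := mul_le_mul_of_nonneg_right had hP0
        have j2 := mul_le_mul_of_nonneg_left hPE hd.le
        linarith only [j1, j2]
      have hQge : (κ - 2) * (κ - 1) ≤ (κ + (m:ℝ) - 1) * (κ + (m:ℝ)) := by
        have g1 : (0:ℝ) ≤ (m:ℝ) * (m:ℝ) := mul_nonneg hM0 hM0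
        have g2 : (0:ℝ) ≤ (m:ℝ) * (κ - 2) := mul_nonneg hM0 hκ2nn
        linarith only [g1, g2, hκ, hM0]
      have hint := mul_le_mul_of_nonneg_right
        (mul_le_mul hQge haP (mul_nonneg ha.le hP0) (le_of_lt q0)) (hr 0)
      linarith only [hint]
    have q1b : (a * ((κ - 2) * (κ - 1) * (c / (a * d)))) / ((κ + (m:ℝ) - 1) * (κ + (m:ℝ)))
        ≤ 4 * (c / (a * (T:ℝ))) := by
      have e : a * ((κ - 2) * (κ - 1) * (c / (a * d))) = (κ - 2) * (κ - 1) * c / d := by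
        field_simp
      rw [e, div_div,
        show 4 * (c / (a * (T:ℝ))) = (4 * c) / (a * (T:ℝ)) from by ring,
        div_le_div_iff₀ (mul_pos hd q0) (mul_pos ha hTpos)]
      have u1 : (0:ℝ) ≤ c * a := mul_nonneg hc ha.le
      have ht2 : (T:ℝ) ≤ 2 * (κ + (m:ℝ)) := by linarith only [hTr2M, hκ]
      have w1 : (κ - 2) * (κ - 1) ≤ κ * (κ + (m:ℝ) - 1) := by
        have g2 : (0:ℝ) ≤ κ * (m:ℝ) := mul_nonneg hκ0.le hM0
        linarith only [g2, hκ]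
      have w2 : (0:ℝ) ≤ (κ - 2) * (κ - 1) := mul_nonneg hκ2nn hκ1nn
      have i1 := mul_le_mul_of_nonneg_right ht2 w2
      have i2 := mul_le_mul_of_nonneg_left w1 (by linarith only [hκ, hM0] : (0:ℝ) ≤ 2 * (κ + (m:ℝ)))
      have u2 : ((T:ℝ)) * ((κ - 2) * (κ - 1)) ≤ (2 * (κ + (m:ℝ))) * (κ * (κ + (m:ℝ) - 1)) := by
        linarith only [i1, i2]
      have u3 : 4 * c * (d * ((κ + (m:ℝ) - 1) * (κ + (m:ℝ))))
          = 2 * c * ((κ + (m:ℝ) - 1) * (κ + (m:ℝ))) * (a * κ) := by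
        linear_combination (-2) * c * ((κ + (m:ℝ) - 1) * (κ + (m:ℝ))) * haκ
      linarith only [mul_le_mul_of_nonneg_left u2 u1, u3]
    linarith only [hdm, q1a, q1b]
  have q2 : (a * (((m:ℝ) + 1) * (4 * c / a ^ 2))) / ((κ + (m:ℝ) - 1) * (κ + (m:ℝ)))
      ≤ 8 * (c / (a * (T:ℝ))) := by
    have e : a * (((m:ℝ) + 1) * (4 * c / a ^ 2)) = 4 * ((m:ℝ) + 1) * c / a := by
      field_simp
    rw [e, div_div,
      show 8 * (c / (a * (T:ℝ))) = (8 * c) / (a * (T:ℝ)) from by ring,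
      div_le_div_iff₀ (mul_pos ha q0) (mul_pos ha hTpos)]
    have v1 : (m:ℝ) + 1 ≤ κ + (m:ℝ) - 1 := by linarith only [hκ]
    have v2 : (T:ℝ) ≤ 2 * (κ + (m:ℝ)) - 3 := by linarith only [hTr2M, hκ]
    have hint := mul_le_mul v1 v2 (by linarith only [hTpos]) (by linarith only [hκ, hM0])
    have u : ((m:ℝ) + 1) * (T:ℝ) ≤ 2 * ((κ + (m:ℝ) - 1) * (κ + (m:ℝ))) := by
      linarith only [hint, hκ, hM0]
    linarith only [mul_le_mul_of_nonneg_left u (by positivity : (0:ℝ) ≤ 4 * c * a)]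
  -- conclude
  have hfin1 : (1 / W) * (∑ k ∈ Finset.range (T + 1), s k * w k)
      ≤ d * E * r 0 + 18 * (c / (a * (T:ℝ))) := by linarith only [hfrac, p1, p2, p3, hcTr]
  have hfin2 : a * r (T + 1) ≤ d * E * r 0 + 12 * (c / (a * (T:ℝ))) := by
    linarith only [haRf, q1, q2]
  have hgoal : 36 * c / (a * (T:ℝ)) = 36 * (c / (a * (T:ℝ))) := by ring
  rw [hgoal]
  linarith only [hfin1, hfin2, hdER0, hcTr]
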